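/- Let X = (X_{ij}) be a real 3×3 positive definite matrix satisfying Xᵀ · I_{2,1} · X = I_{2,1}, det X = 1, and X₁₁ > 1. Define y₂ = √((X₁₁ − 1)/2), y₁ = −(X₁₂ + X₁₃)/(2y₂), y₄ = (X₁₂ − X₁₃)/(2y₂), and let Y be the symmetric 2×2 matrix with first row (y₁, y₂) and second row (y₂, y₄). Then Φ₂₁(Y) = X. -/

import Mathlib

open Matrix

/-- The covering map `Φ₂₁ : SL(2,ℝ) → SO⁺(2,1)`, written out entrywise. -/
noncomputable def Phi21 (Y : Matrix (Fin 2) (Fin 2) ℝ) : Matrix (Fin 3) (Fin 3) ℝ :=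
  let y₁ := Y 0 0
  let y₂ := Y 0 1
  let y₃ := Y 1 0
  let y₄ := Y 1 1
  !![1 + 2*y₂*y₃, y₂*y₄ - y₁*y₃, -(y₁*y₃ + y₂*y₄);
     y₃*y₄ - y₁*y₂, (y₁^2 - y₂^2 - y₃^2 + y₄^2)/2, (y₁^2 + y₂^2 - y₃^2 - y₄^2)/2;
     -(y₁*y₂ + y₃*y₄), (y₁^2 - y₂^2 + y₃^2 - y₄^2)/2, (y₁^2 + y₂^2 + y₃^2 + y₄^2)/2]

/-- The indefinite form matrix `I_{2,1} = diag(1,1,−1)`. -/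
def I21 : Matrix (Fin 3) (Fin 3) ℝ := Matrix.diagonal ![1, 1, -1]

theorem stmt_9 (X : Matrix (Fin 3) (Fin 3) ℝ) (hpos : X.PosDef)
    (hso : Xᵀ * I21 * X = I21) (hdet : X.det = 1) (h11 : 1 < X 0 0)
    (y₁ y₂ y₄ : ℝ)
    (hy₂ : y₂ = Real.sqrt ((X 0 0 - 1) / 2))
    (hy₁ : y₁ = -(X 0 1 + X 0 2) / (2 * y₂))
    (hy₄ : y₄ = (X 0 1 - X 0 2) / (2 * y₂)) :
    Phi21 !![y₁, y₂; y₂, y₄] = X := by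
  -- symmetry
  have h10 : X 1 0 = X 0 1 := by simpa using congrFun (congrFun hpos.1 0) 1
  have h20 : X 2 0 = X 0 2 := by simpa using congrFun (congrFun hpos.1 0) 2
  have h21 : X 2 1 = X 1 2 := by simpa using congrFun (congrFun hpos.1 1) 2
  -- Lorentz group equations
  have E00 := congrFun (congrFun hso 0) 0
  have E01 := congrFun (congrFun hso 0) 1
  have E02 := congrFun (congrFun hso 0) 2
  have E11 := congrFun (congrFun hso 1) 1
  have E12 := congrFun (congrFun hso 1) 2
  have E22 := congrFun (congrFun hso 2) 2
  simp [Matrix.mul_apply, I21, Fin.sum_univ_three, Matrix.diagonal] at E00 E01 E02 E11 E12 E22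
  rw [Matrix.det_fin_three] at hdet
  simp only [h10, h20, h21] at E00 E01 E02 E11 E12 E22 hdet
  -- rewrite the target right hand side
  conv_rhs => rw [Matrix.eta_fin_three X, h10, h20, h21]
  set a := X 0 0 with ha'
  set b := X 0 1 with hb'
  set c := X 0 2 with hc'
  set d := X 1 1 with hd'
  set e := X 1 2 with he'
  set f := X 2 2 with hf'
  -- positivity of diagonal entries
  have hd0 : (0:ℝ) < d := by
    have hx : (Pi.single 1 1 : Fin 3 → ℝ) ≠ 0 :=
      Function.ne_iff.mpr ⟨1, by simp⟩
    have := hpos.dotProduct_mulVec_pos hx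
    simpa [dotProduct, Fin.sum_univ_three, mulVec, Pi.single] using this
  have hf0 : (0:ℝ) < f := by
    have hx : (Pi.single 2 1 : Fin 3 → ℝ) ≠ 0 :=
      Function.ne_iff.mpr ⟨2, by simp⟩
    have := hpos.dotProduct_mulVec_pos hx
    simpa [dotProduct, Fin.sum_univ_three, mulVec, Pi.single] using this
  -- the key quadratic
  have key : (f + d) * ((f - d - (a-1)) * (f - d - (a+1))) = 0 := by
    linear_combination (-2*b)*E01 + (-2*c)*E02 - (f - d - 2*a)*(E11 + E22) + (f + d)*E00
  have hfd : f - d = a - 1 := by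
    rcases mul_eq_zero.mp key with h | h
    · linarith
    rcases mul_eq_zero.mp h with h | hT
    · linarith
    -- bad branch: derive det = -1, contradiction
    exfalso
    have hT' : f - d = a + 1 := by linarith
    have hb2 : b^2 = (a+1)*(d+1) := by
      linear_combination (E00 + E11 + E22)/2 + ((f+d+a+1)/2)*hT'
    have hc2 : c^2 = (a+1)*(d+a) := by
      linear_combination (E11 + E22 - E00)/2 + ((f+d+a+1)/2)*hT'
    have he2 : e^2 = (a+1)*(d+1) + d^2 - 1 := by
      linear_combination -E11 + hb2
    have hbc : b*c = e*(a+1) := by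
      linear_combination E12 + e*hT'
    have : (2:ℝ) = 0 := by
      linear_combination -hdet + 2*e*hbc + (a+2)*he2 - d*hc2 - f*hb2 + (a*d-(a+1)*(d+1))*hT'
    norm_num at this
  -- consequences
  have L3 : b*c = e*(a-1) := by linear_combination E12 + e*hfd
  have L1 : b^2 + c^2 = 2*d*(a-1) + (a-1)^2 := by
    linear_combination E11 + E22 + (f+d+a-1)*hfd
  have L2 : b^2 + c^2 = 2*f*(a-1) - (a-1)^2 := by
    linear_combination L1 - 2*(a-1)*hfd
  -- the square root
  have hs2 : y₂^2 = (a-1)/2 := by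
    rw [hy₂]; exact Real.sq_sqrt (by linarith)
  have hs0 : 0 < y₂ := by
    rw [hy₂]; exact Real.sqrt_pos.mpr (by linarith)
  have hsne : y₂ ≠ 0 := ne_of_gt hs0
  -- finish entrywise
  ext i j
  fin_cases i <;> fin_cases j <;>
    simp only [Phi21, Matrix.cons_val', Matrix.cons_val_zero, Matrix.cons_val_one,
      Matrix.head_cons, Matrix.head_fin_const, Matrix.cons_val_two, Matrix.tail_cons,
      Matrix.of_apply, Matrix.cons_val_fin_one, Fin.mk_zero, Fin.mk_one, Fin.reduceFinMk, Fin.isValue]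
  · linear_combination 2*hs2
  · rw [hy₁, hy₄]; field_simp; ring
  · rw [hy₁, hy₄]; field_simp; ring
  · rw [hy₁, hy₄]; field_simp; ring
  · rw [hy₁, hy₄]; field_simp
    linear_combination 2*L1 + (-8*y₂^2 - 8*d - 4*(a-1))*hs2
  · rw [hy₁, hy₄]; field_simp
    linear_combination 4*L3 - 8*e*hs2
  · rw [hy₁, hy₄]; field_simp; ring
  · rw [hy₁, hy₄]; field_simp
    linear_combination 4*L3 - 8*e*hs2
  · rw [hy₁, hy₄]; field_simp
    linear_combination 2*L2 + (8*y₂^2 - 8*f + 4*(a-1))*hs2
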